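/- Let σ : A → A⁺ be a substitution such that (X_σ, T) is minimal and is not a single periodic orbit. Then σ is tame, i.e., no letter of A_l is left isolated and no letter of A_l is right isolated. -/

import Mathlib

namespace SubstMin

variable {A : Type*}

/-- Apply a map `σ : A → A⁺` to a word by concatenation. -/
def substW (σ : A → List A) (w : List A) : List A := w.flatMap σ

/-- `n`-th iterate of the substitution applied to a word. -/
def substIter (σ : A → List A) (n : ℕ) (w : List A) : List A := (substW σ)^[n] w

/-- The set `A_l` of letters `a` with `|σⁿ(a)| → ∞`. -/
def longLetters (σ : A → List A) : Set A :=
  {a | Filter.Tendsto (fun n => (substIter σ n [a]).length) Filter.atTop Filter.atTop}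

/-- The set `A_s = A \ A_l`. -/
def shortLetters (σ : A → List A) : Set A := (longLetters σ)ᶜ

/-- `σ` is a substitution: letters map to nonempty words and `A_l ≠ ∅`. -/
def IsSubstitution (σ : A → List A) : Prop :=
  (∀ a, σ a ≠ []) ∧ (longLetters σ).Nonempty

/-- The language `L(σ)`: factors of some `σⁿ(a)`, `n ≥ 1`. -/
def lang (σ : A → List A) : Set (List A) :=
  {w | ∃ (a : A) (n : ℕ), 1 ≤ n ∧ w <:+: substIter σ n [a]}

/-- The finite factor `x[s,t]` of a bi-infinite sequence. -/
def factorOf (x : ℤ → A) (s t : ℤ) : List A :=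
  (List.range (t - s + 1).toNat).map fun i => x (s + (i : ℤ))

/-- The substitution dynamical system `X_σ`. -/
def XSub (σ : A → List A) : Set (ℤ → A) :=
  {x | ∀ s t : ℤ, s ≤ t → factorOf x s t ∈ lang σ}

/-- The left shift `T`. -/
def shiftT (x : ℤ → A) : ℤ → A := fun i => x (i + 1)

/-- A subshift is minimal if it is nonempty and has no nonempty proper closed
shift-invariant subset. -/
def IsMinimalSubshift [TopologicalSpace A] (X : Set (ℤ → A)) : Prop :=
  X.Nonempty ∧ ∀ Y : Set (ℤ → A), Y ⊆ X → Y.Nonempty → IsClosed Y →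
    shiftT '' Y = Y → Y = X

/-- `a ∈ A_l` is left isolated: `σⁿ(a) = u a w` with `u ∈ A_s⁺`, `w ∈ A*`. -/
def LeftIsolated (σ : A → List A) (a : A) : Prop :=
  ∃ n : ℕ, 1 ≤ n ∧ ∃ u w : List A, u ≠ [] ∧ (∀ b ∈ u, b ∈ shortLetters σ) ∧
    substIter σ n [a] = u ++ a :: w

/-- `a ∈ A_l` is right isolated: `σᵐ(a) = w a u` with `u ∈ A_s⁺`, `w ∈ A*`. -/
def RightIsolated (σ : A → List A) (a : A) : Prop :=
  ∃ n : ℕ, 1 ≤ n ∧ ∃ u w : List A, u ≠ [] ∧ (∀ b ∈ u, b ∈ shortLetters σ) ∧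
    substIter σ n [a] = w ++ a :: u

/-- `σ` is tame: no letter of `A_l` is left or right isolated. -/
def Tame (σ : A → List A) : Prop :=
  ∀ a ∈ longLetters σ, ¬ LeftIsolated σ a ∧ ¬ RightIsolated σ a

/-- `σ` is `l`-primitive. -/
def LPrimitive (σ : A → List A) : Prop :=
  ∃ n : ℕ, 1 ≤ n ∧ ∀ a ∈ longLetters σ, ∀ b ∈ longLetters σ, a ∈ substIter σ n [b]

/-- `a → b` : `b` occurs in `σⁿ(a)` for some `n ≥ 1`. -/
def arrow (σ : A → List A) (a b : A) : Prop :=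
  ∃ n : ℕ, 1 ≤ n ∧ b ∈ substIter σ n [a]

/-- `A_{∘,l} = {a ∈ A_l | a → a}`. -/
def circLong (σ : A → List A) : Set A := {a | a ∈ longLetters σ ∧ arrow σ a a}

/-- `A_{min,l}`: letters of `A_l` minimal in `A_l`. -/
def minLong (σ : A → List A) : Set A :=
  {a | a ∈ longLetters σ ∧ ∀ b ∈ longLetters σ, arrow σ a b → arrow σ b a}

/-- `x` is a periodic point of the shift. -/
def IsPeriodicPoint (x : ℤ → A) : Prop := ∃ p : ℕ, 1 ≤ p ∧ shiftT^[p] x = x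

/-- `X` is a single periodic orbit. -/
def IsSinglePeriodicOrbit (X : Set (ℤ → A)) : Prop :=
  ∃ x : ℤ → A, IsPeriodicPoint x ∧ X = Set.range fun i : ℤ => fun j => x (j + i)

/-- `y = σ(x)` : `y` is obtained from `x` by applying `σ` to each coordinate and
concatenating, with `σ(x(0))` placed starting at coordinate `0`. -/
def IsSubstImage (σ : A → List A) (x y : ℤ → A) : Prop :=
  ∃ o : ℤ → ℤ, o 0 = 0 ∧ (∀ i : ℤ, o (i + 1) = o i + (σ (x i)).length) ∧
    ∀ i : ℤ, factorOf y (o i) (o (i + 1) - 1) = σ (x i)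

/-- The map `s` on nonempty subsets of `A_l`: `s(F) = ⋃_{a ∈ F} (Lett(σ(a)) ∩ A_l)`. -/
def sMap (σ : A → List A) (F : Set A) : Set A :=
  {b | b ∈ longLetters σ ∧ ∃ a ∈ F, b ∈ σ a}

end SubstMin

namespace SubstMin

variable {A : Type*}

lemma substW_append (σ : A → List A) (x y : List A) :
    substW σ (x ++ y) = substW σ x ++ substW σ y := by
  simp [substW]

lemma substIter_zero (σ : A → List A) (w : List A) : substIter σ 0 w = w := rfl

lemma substIter_add (σ : A → List A) (m n : ℕ) (w : List A) :
    substIter σ (m + n) w = substIter σ m (substIter σ n w) :=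
  Function.iterate_add_apply _ m n w

lemma substIter_succ' (σ : A → List A) (n : ℕ) (w : List A) :
    substIter σ (n + 1) w = substW σ (substIter σ n w) :=
  Function.iterate_succ_apply' _ n w

lemma substIter_succ (σ : A → List A) (n : ℕ) (w : List A) :
    substIter σ (n + 1) w = substIter σ n (substW σ w) :=
  Function.iterate_succ_apply _ n w

lemma substIter_append (σ : A → List A) (k : ℕ) (x y : List A) :
    substIter σ k (x ++ y) = substIter σ k x ++ substIter σ k y := by
  induction k generalizing x y with
  | zero => rfl
  | succ k ih => rw [substIter_succ, substW_append, ih, substIter_succ, substIter_succ]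

lemma substIter_nil (σ : A → List A) (k : ℕ) : substIter σ k [] = [] := by
  induction k with
  | zero => rfl
  | succ k ih => rw [substIter_succ]; simp [substW, ih]

lemma substIter_flatten (σ : A → List A) (k : ℕ) (l : List (List A)) :
    substIter σ k l.flatten = (l.map (substIter σ k)).flatten := by
  induction l with
  | nil => simp [substIter_nil]
  | cons hd tl ih => simp [substIter_append, ih]

lemma substW_ne_nil {σ : A → List A} (h : ∀ a, σ a ≠ []) {w : List A} (hw : w ≠ []) :
    substW σ w ≠ [] := by
  cases w with
  | nil => exact absurd rfl hw
  | cons b t => simp [substW, h b]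

lemma substIter_ne_nil {σ : A → List A} (h : ∀ a, σ a ≠ []) {w : List A} (hw : w ≠ []) (k : ℕ) :
    substIter σ k w ≠ [] := by
  induction k with
  | zero => exact hw
  | succ k ih => rw [substIter_succ']; exact substW_ne_nil h ih

lemma length_le_substW {σ : A → List A} (h : ∀ a, σ a ≠ []) (w : List A) :
    w.length ≤ (substW σ w).length := by
  induction w with
  | nil => simp
  | cons b t ih =>
    have : 1 ≤ (σ b).length := List.length_pos_iff.mpr (h b)
    simp only [substW, List.flatMap_cons, List.length_append, List.length_cons]
    have := ih
    simp only [substW] at this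
    omega

lemma substIter_length_mono {σ : A → List A} (h : ∀ a, σ a ≠ []) (w : List A) :
    Monotone fun k => (substIter σ k w).length := by
  apply monotone_nat_of_le_succ
  intro k
  rw [substIter_succ']
  exact length_le_substW h _


lemma short_bounded {σ : A → List A} (h : ∀ a, σ a ≠ []) {a : A} (ha : a ∈ shortLetters σ) :
    ∃ B, ∀ k, (substIter σ k [a]).length ≤ B := by
  by_contra hc
  push_neg at hc
  apply ha
  exact Filter.tendsto_atTop_atTop_of_monotone (substIter_length_mono h [a])
    (fun b => by obtain ⟨k, hk⟩ := hc b; exact ⟨k, hk.le⟩)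

lemma word_short_bounded {σ : A → List A} (h : ∀ a, σ a ≠ []) {u : List A}
    (hu : ∀ b ∈ u, b ∈ shortLetters σ) :
    ∃ B, ∀ k, (substIter σ k u).length ≤ B := by
  induction u with
  | nil => exact ⟨0, fun k => by simp [substIter_nil]⟩
  | cons b t ih =>
    obtain ⟨B1, hB1⟩ := short_bounded h (hu b (by simp))
    obtain ⟨B2, hB2⟩ := ih fun c hc => hu c (by simp [hc])
    refine ⟨B1 + B2, fun k => ?_⟩
    have : (b :: t) = [b] ++ t := rfl
    rw [this, substIter_append, List.length_append]
    exact Nat.add_le_add (hB1 k) (hB2 k)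

lemma eventually_periodic [Fintype A] {σ : A → List A} (h : ∀ a, σ a ≠ []) {u : List A}
    (hu : ∀ b ∈ u, b ∈ shortLetters σ) (n : ℕ) :
    ∃ j0 d : ℕ, 1 ≤ j0 ∧ 1 ≤ d ∧
      ∀ i, j0 ≤ i → substIter σ (n * (i + d)) u = substIter σ (n * i) u := by
  obtain ⟨B, hB⟩ := word_short_bounded h hu
  set v : ℕ → List A := fun j => substIter σ (n * j) u with hv
  have hmaps : Set.MapsTo v Set.univ {l : List A | l.length ≤ B} := fun j _ => hB _
  obtain ⟨j1, -, j2, -, hne, heq⟩ :=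
    Set.infinite_univ.exists_ne_map_eq_of_mapsTo hmaps (List.finite_length_le A B)
  -- wlog j1 < j2
  obtain ⟨k1, k2, hlt, heq⟩ : ∃ k1 k2, k1 < k2 ∧ v k1 = v k2 := by
    rcases lt_or_gt_of_ne hne with hlt | hlt
    · exact ⟨j1, j2, hlt, heq⟩
    · exact ⟨j2, j1, hlt, heq.symm⟩
  refine ⟨max k1 1, k2 - k1, le_max_right _ _, by omega, fun i hi => ?_⟩
  have hik : k1 ≤ i := le_trans (le_max_left _ _) hi
  have h1 : i + (k2 - k1) = (i - k1) + k2 := by omega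
  have h2 : i = (i - k1) + k1 := by omega
  calc substIter σ (n * (i + (k2 - k1))) u
      = substIter σ (n * (i - k1) + n * k2) u := by rw [h1, Nat.mul_add]
    _ = substIter σ (n * (i - k1)) (v k2) := substIter_add ..
    _ = substIter σ (n * (i - k1)) (v k1) := by rw [heq]
    _ = substIter σ (n * (i - k1) + n * k1) u := (substIter_add ..).symm
    _ = substIter σ (n * i) u := by rw [← Nat.mul_add, ← h2]

/-- The bi-infinite periodic word with period block `P`. -/
noncomputable def perWord (P : List A) (hP : P ≠ []) : ℤ → A := fun j =>
  P.get ⟨(j % (P.length : ℤ)).toNat, by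
    have hp : (0 : ℤ) < P.length := by
      exact_mod_cast List.length_pos_iff.mpr hP
    have h1 := Int.emod_lt_of_pos j hp
    have h0 := Int.emod_nonneg j (ne_of_gt hp)
    omega⟩

lemma perWord_add_mul (P : List A) (hP : P ≠ []) (j k : ℤ) :
    perWord P hP (j + (P.length : ℤ) * k) = perWord P hP j := by
  unfold perWord
  simp only [Int.add_mul_emod_self_left]

lemma perWord_period (P : List A) (hP : P ≠ []) (j : ℤ) :
    perWord P hP (j + (P.length : ℤ)) = perWord P hP j := by
  simpa using perWord_add_mul P hP j 1

lemma perWord_nat (P : List A) (hP : P ≠ []) (i : ℕ) (hi : i < P.length) :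
    perWord P hP (i : ℤ) = P.get ⟨i, hi⟩ := by
  unfold perWord
  have h : ((i : ℤ)) % (P.length : ℤ) = (i : ℤ) :=
    Int.emod_eq_of_lt (by positivity) (by exact_mod_cast hi)
  simp only [h, Int.toNat_natCast]

lemma perWord_replicate (P : List A) (hP : P ≠ []) (M : ℕ) :
    (List.replicate M P).flatten
      = (List.range (M * P.length)).map (fun i : ℕ => perWord P hP i) := by
  induction M with
  | zero => simp
  | succ M ih =>
    rw [List.replicate_succ', List.flatten_append, ih]
    have : (M + 1) * P.length = M * P.length + P.length := by ring
    rw [this, List.range_add, List.map_append]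
    congr 1
    simp only [List.flatten, List.flatten_cons, List.flatten_nil, List.append_nil,
      List.map_map]
    apply List.ext_getElem (by simp)
    intro i h1 h2
    simp only [List.getElem_map, List.getElem_range, Function.comp]
    have : ((M * P.length + i : ℕ) : ℤ) = (i : ℤ) + (P.length : ℤ) * M := by push_cast; ring
    rw [this, perWord_add_mul]
    have hi : i < P.length := by simpa using h1
    rw [perWord_nat P hP i hi]
    simp

lemma factorOf_eq (x : ℤ → A) (s t : ℤ) : factorOf x s t
    = (List.range (t - s + 1).toNat).map (fun i : ℕ => x (s + (i : ℤ))) := by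
  unfold factorOf
  generalize List.range (t - s + 1).toNat = l
  induction l with
  | nil => rfl
  | cons hd tl ih => simp_all

lemma factorOf_shift (x : ℤ → A) (i s t : ℤ) :
    factorOf (fun j => x (j + i)) s t = factorOf x (s + i) (t + i) := by
  rw [factorOf_eq, factorOf_eq]
  have h : (t + i - (s + i) + 1) = (t - s + 1) := by ring
  rw [h]
  apply List.map_congr_left
  intro k _
  congr 1
  ring

lemma shiftT_iterate (x : ℤ → A) (k : ℕ) :
    shiftT^[k] x = fun j => x (j + (k : ℤ)) := by
  induction k with
  | zero => simp
  | succ k ih =>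
    rw [Function.iterate_succ_apply', ih]
    funext j
    simp only [shiftT]
    congr 1
    push_cast
    ring

lemma factorOf_perWord_infix (P : List A) (hP : P ≠ []) (s t : ℤ) :
    ∃ M : ℕ, factorOf (perWord P hP) s t <:+: (List.replicate M P).flatten := by
  set x := perWord P hP with hx
  set p := P.length with hpl
  have hp : 0 < p := List.length_pos_iff.mpr hP
  have hpz : (0 : ℤ) < (p : ℤ) := by exact_mod_cast hp
  set s0 := (s % (p : ℤ)).toNat with hs0
  set L := (t - s + 1).toNat with hL
  refine ⟨s0 + L, ?_⟩
  have hkey : ∀ i : ℕ, x (s + (i : ℤ)) = x ((s0 + i : ℕ) : ℤ) := by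
    intro i
    have hsm : (s0 : ℤ) = s % (p : ℤ) :=
      Int.toNat_of_nonneg (Int.emod_nonneg s (ne_of_gt hpz))
    have : s + (i : ℤ) = ((s0 + i : ℕ) : ℤ) + (p : ℤ) * (s / (p : ℤ)) := by
      push_cast
      rw [hsm]
      have := Int.emod_add_mul_ediv s (p : ℤ)
      linarith
    rw [this, hx, perWord_add_mul]
  have hrep : (List.replicate (s0 + L) P).flatten
      = (List.range ((s0 + L) * p)).map (fun i : ℕ => x (i : ℤ)) :=
    perWord_replicate P hP _
  have hsub : factorOf x s t
      = (((List.range ((s0 + L) * p)).map (fun i : ℕ => x (i : ℤ))).drop s0).take L := by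
    have hlen : s0 + L ≤ (s0 + L) * p := Nat.le_mul_of_pos_right _ hp
    rw [factorOf_eq]
    apply List.ext_getElem
    · simp only [List.length_map, List.length_range, List.length_take, List.length_drop]
      omega
    · intro i h1 h2
      have hiL : i < L := by
        simp only [List.length_map, List.length_range] at h1; exact h1
      simp only [List.getElem_map, List.getElem_range, List.getElem_take,
        List.getElem_drop]
      exact hkey i
  rw [hsub, hrep]
  exact ((List.take_prefix _ _).isInfix).trans ((List.drop_suffix _ _).isInfix)


lemma periodic_of_rep_infix [TopologicalSpace A] [DiscreteTopology A]
    (σ : A → List A) (hmin : IsMinimalSubshift (XSub σ)) (P : List A) (hP : P ≠ [])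
    (hinf : ∀ m : ℕ, ∃ (a : A) (N : ℕ), 1 ≤ N ∧
      (List.replicate m P).flatten <:+: substIter σ N [a]) :
    IsSinglePeriodicOrbit (XSub σ) := by
  set x := perWord P hP with hx
  set p := P.length with hpl
  have hp : 0 < p := List.length_pos_iff.mpr hP
  set g : ℤ → (ℤ → A) := fun i => fun j => x (j + i) with hg
  -- every shift of x has all factors in the language
  have hmem : ∀ i : ℤ, g i ∈ XSub σ := by
    intro i s t _hst
    rw [hg]
    rw [factorOf_shift x i s t]
    obtain ⟨M, hM⟩ := factorOf_perWord_infix P hP (s + i) (t + i)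
    obtain ⟨a, N, hN, hinf'⟩ := hinf M
    exact ⟨a, N, hN, hM.trans hinf'⟩
  set Y : Set (ℤ → A) := Set.range g with hY
  have hsub : Y ⊆ XSub σ := by rintro y ⟨i, rfl⟩; exact hmem i
  have hne : Y.Nonempty := ⟨g 0, ⟨0, rfl⟩⟩
  -- g i = g (i % p)
  have hgmod : ∀ i : ℤ, g i = g (i % (p : ℤ)) := by
    intro i
    funext j
    show x (j + i) = x (j + i % (p : ℤ))
    have : j + i = (j + i % (p : ℤ)) + (p : ℤ) * (i / (p : ℤ)) := by
      have := Int.emod_add_mul_ediv i (p : ℤ)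
      linarith
    rw [this, hx, perWord_add_mul]
  have hfin : Y.Finite := by
    have : Y = g '' Set.Ico (0 : ℤ) (p : ℤ) := by
      apply Set.Subset.antisymm
      · rintro y ⟨i, rfl⟩
        have hpz : ((p : ℤ)) ≠ 0 := by exact_mod_cast hp.ne'
        exact ⟨i % (p : ℤ), ⟨Int.emod_nonneg i hpz,
          Int.emod_lt_of_pos i (by exact_mod_cast hp)⟩, (hgmod i).symm⟩
      · exact Set.image_subset_range g _
    rw [this]
    exact (Set.finite_Ico _ _).image g
  have hclosed : IsClosed Y := hfin.isClosed
  have hshift : ∀ i : ℤ, shiftT (g i) = g (i + 1) := by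
    intro i
    funext j
    show x (j + 1 + i) = x (j + (i + 1))
    congr 1
    ring
  have hinv : shiftT '' Y = Y := by
    apply Set.eq_of_subset_of_subset
    · rintro y ⟨z, ⟨i, rfl⟩, rfl⟩
      exact ⟨i + 1, (hshift i).symm⟩
    · rintro y ⟨i, rfl⟩
      exact ⟨g (i - 1), ⟨i - 1, rfl⟩, by rw [hshift, sub_add_cancel]⟩
  have hYX : Y = XSub σ := hmin.2 Y hsub hne hclosed hinv
  refine ⟨x, ⟨p, hp, ?_⟩, hYX.symm⟩
  rw [shiftT_iterate]
  funext j
  exact perWord_period P hP j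

section Decomp
variable (σ : A → List A) (n : ℕ) (u : List A)

/-- `v j = σ^{nj}(u)`. -/
def vSeq (j : ℕ) : List A := substIter σ (n * j) u

lemma vSeq_succ (j : ℕ) : vSeq σ n u (j + 1) = substIter σ n (vSeq σ n u j) := by
  rw [vSeq, vSeq, ← substIter_add]
  congr 1
  ring

/-- Left block: `v_{k-1} ⋯ v_1 v_0`. -/
def lBlock (k : ℕ) : List A := ((List.range k).reverse.map (vSeq σ n u)).flatten

/-- Right block: `v_0 v_1 ⋯ v_{k-1}`. -/
def rBlock (k : ℕ) : List A := ((List.range k).map (vSeq σ n u)).flatten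

lemma map_vSeq_succ (l : List ℕ) :
    List.map (vSeq σ n u ∘ Nat.succ) l = List.map (substIter σ n ∘ vSeq σ n u) l :=
  List.map_congr_left fun j _ => vSeq_succ σ n u j

lemma vSeq_zero : vSeq σ n u 0 = u := by
  rw [vSeq, Nat.mul_zero]; rfl

lemma lBlock_succ (k : ℕ) :
    lBlock σ n u (k + 1) = substIter σ n (lBlock σ n u k) ++ u := by
  rw [lBlock, lBlock, substIter_flatten, List.range_succ_eq_map]
  rw [show (0 :: List.map Nat.succ (List.range k)).reverse
      = (List.range k).reverse.map Nat.succ ++ [0] by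
    simp [List.map_reverse]]
  rw [List.map_append, List.flatten_append, List.map_map, List.map_map,
    map_vSeq_succ]
  simp [vSeq_zero]

lemma rBlock_succ (k : ℕ) :
    rBlock σ n u (k + 1) = u ++ substIter σ n (rBlock σ n u k) := by
  rw [rBlock, rBlock, substIter_flatten, List.range_succ_eq_map]
  rw [List.map_cons, List.flatten_cons, List.map_map, List.map_map,
    map_vSeq_succ, vSeq_zero]

lemma lBlock_add (k d : ℕ) :
    lBlock σ n u (k + d)
      = ((List.range d).reverse.map (fun r => vSeq σ n u (k + r))).flatten
        ++ lBlock σ n u k := by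
  rw [lBlock, lBlock, List.range_add, List.reverse_append, List.map_append,
    List.flatten_append]
  congr 2
  rw [← List.map_reverse, List.map_map]
  simp [Function.comp]

lemma rBlock_add (k d : ℕ) :
    rBlock σ n u (k + d)
      = rBlock σ n u k
        ++ ((List.range d).map (fun r => vSeq σ n u (k + r))).flatten := by
  rw [rBlock, rBlock, List.range_add, List.map_append, List.flatten_append,
    List.map_map]
  rfl

end Decomp

section Iso
variable {σ : A → List A} (h : ∀ a, σ a ≠ []) {n : ℕ} {u w : List A} {a : A}

/-- Left-isolated decomposition: `σ^{nk}(a) = lBlock k ++ a :: tail`. -/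
lemma left_decomp (heq : substIter σ n [a] = u ++ a :: w) :
    ∀ k : ℕ, ∃ t : List A, substIter σ (n * k) [a] = lBlock σ n u k ++ a :: t := by
  intro k
  induction k with
  | zero => exact ⟨[], by simp [lBlock, substIter]⟩
  | succ k ih =>
    obtain ⟨t, ht⟩ := ih
    refine ⟨w ++ substIter σ n t, ?_⟩
    have h1 : n * (k + 1) = n + n * k := by ring
    rw [h1, substIter_add, ht]
    rw [show lBlock σ n u k ++ a :: t = lBlock σ n u k ++ [a] ++ t by simp]
    rw [substIter_append, substIter_append, heq, lBlock_succ]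
    simp

/-- Right-isolated decomposition: `σ^{nk}(a) = tail ++ a :: rBlock k`. -/
lemma right_decomp (heq : substIter σ n [a] = w ++ a :: u) :
    ∀ k : ℕ, ∃ t : List A, substIter σ (n * k) [a] = t ++ a :: rBlock σ n u k := by
  intro k
  induction k with
  | zero => exact ⟨[], by simp [rBlock, substIter]⟩
  | succ k ih =>
    obtain ⟨t, ht⟩ := ih
    refine ⟨substIter σ n t ++ w, ?_⟩
    have h1 : n * (k + 1) = n + n * k := by ring
    rw [h1, substIter_add, ht]
    rw [show t ++ a :: rBlock σ n u k = t ++ [a] ++ rBlock σ n u k by simp]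
    rw [substIter_append, substIter_append, heq, rBlock_succ]
    simp

end Iso

section Chunk
variable {σ : A → List A} {n : ℕ} {u : List A} {j0 d : ℕ}
variable (hper : ∀ i, j0 ≤ i → vSeq σ n u (i + d) = vSeq σ n u i)

include hper in
lemma vSeq_per_mul : ∀ (m i : ℕ), j0 ≤ i → vSeq σ n u (i + m * d) = vSeq σ n u i := by
  intro m
  induction m with
  | zero => intro i _; simp
  | succ m ih =>
    intro i hi
    have h1 : i + (m + 1) * d = (i + m * d) + d := by ring
    rw [h1, hper _ (le_trans hi (Nat.le_add_right _ _)), ih i hi]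

include hper in
lemma chunk_eq (m : ℕ) :
    (List.map (fun r => vSeq σ n u (j0 + m * d + r)) (List.range d))
      = List.map (fun r => vSeq σ n u (j0 + r)) (List.range d) := by
  apply List.map_congr_left
  intro r _
  have h1 : j0 + m * d + r = (j0 + r) + m * d := by ring
  rw [h1, vSeq_per_mul hper m (j0 + r) (Nat.le_add_right _ _)]

include hper in
lemma lBlock_rep (m : ℕ) :
    lBlock σ n u (j0 + m * d)
      = (List.replicate m
          (((List.range d).reverse.map (fun r => vSeq σ n u (j0 + r))).flatten)).flatten
        ++ lBlock σ n u j0 := by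
  induction m with
  | zero => simp
  | succ m ih =>
    have h1 : j0 + (m + 1) * d = (j0 + m * d) + d := by ring
    rw [h1, lBlock_add, ih, List.replicate_succ, List.flatten_cons, List.append_assoc]
    congr 2
    rw [List.map_reverse, List.map_reverse, chunk_eq hper]

include hper in
lemma rBlock_rep (m : ℕ) :
    rBlock σ n u (j0 + m * d)
      = rBlock σ n u j0
        ++ (List.replicate m
          (((List.range d).map (fun r => vSeq σ n u (j0 + r))).flatten)).flatten := by
  induction m with
  | zero => simp
  | succ m ih =>
    have h1 : j0 + (m + 1) * d = (j0 + m * d) + d := by ring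
    rw [h1, rBlock_add, ih, List.replicate_succ', List.flatten_append, List.append_assoc]
    congr 2
    rw [chunk_eq hper]
    simp

end Chunk

lemma flatten_ne_nil {l : List (List A)} (hl : l ≠ []) (h : ∀ w ∈ l, w ≠ []) :
    l.flatten ≠ [] := by
  cases l with
  | nil => exact absurd rfl hl
  | cons hd tl =>
    simp only [List.flatten_cons, ne_eq, List.append_eq_nil_iff]
    intro ⟨h1, _⟩
    exact h hd (by simp) h1

lemma lP_ne_nil {σ : A → List A} (h : ∀ a, σ a ≠ []) {u : List A} (hu : u ≠ [])
    {n j0 d : ℕ} (hd : 1 ≤ d) :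
    (((List.range d).reverse.map (fun r => vSeq σ n u (j0 + r))).flatten) ≠ [] := by
  apply flatten_ne_nil
  · simp only [ne_eq, List.reverse_eq_nil_iff, List.map_eq_nil_iff] at *
    simp only [List.map_eq_nil_iff, List.reverse_eq_nil_iff, List.range_eq_nil]
    omega
  · intro w hw
    simp only [List.mem_map, List.mem_reverse, List.mem_range] at hw
    obtain ⟨r, _, rfl⟩ := hw
    exact substIter_ne_nil h hu _

lemma rP_ne_nil {σ : A → List A} (h : ∀ a, σ a ≠ []) {u : List A} (hu : u ≠ [])
    {n j0 d : ℕ} (hd : 1 ≤ d) :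
    (((List.range d).map (fun r => vSeq σ n u (j0 + r))).flatten) ≠ [] := by
  apply flatten_ne_nil
  · simp only [ne_eq, List.map_eq_nil_iff, List.range_eq_nil]
    omega
  · intro w hw
    simp only [List.mem_map, List.mem_range] at hw
    obtain ⟨r, _, rfl⟩ := hw
    exact substIter_ne_nil h hu _


end SubstMin

/-- If `(X_σ, T)` is minimal and not a single periodic orbit, then `σ`
is tame. -/
theorem statement13 {A : Type*} [Fintype A] [TopologicalSpace A] [DiscreteTopology A]
    (σ : A → List A) (hσ : SubstMin.IsSubstitution σ)
    (hmin : SubstMin.IsMinimalSubshift (SubstMin.XSub σ))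
    (hnp : ¬ SubstMin.IsSinglePeriodicOrbit (SubstMin.XSub σ)) :
    SubstMin.Tame σ := by
  intro a ha
  have hne : ∀ b, σ b ≠ [] := hσ.1
  constructor
  · rintro ⟨n, hn, u, w, hune, hus, heq⟩
    apply hnp
    obtain ⟨j0, d, hj0, hd, hper⟩ := SubstMin.eventually_periodic hne hus n
    have hper' : ∀ i, j0 ≤ i → SubstMin.vSeq σ n u (i + d) = SubstMin.vSeq σ n u i :=
      fun i hi => hper i hi
    refine SubstMin.periodic_of_rep_infix σ hmin
      (((List.range d).reverse.map (fun r => SubstMin.vSeq σ n u (j0 + r))).flatten)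
      (SubstMin.lP_ne_nil hne hune hd) (fun m => ?_)
    obtain ⟨t, ht⟩ := SubstMin.left_decomp heq (j0 + m * d)
    refine ⟨a, n * (j0 + m * d), Nat.one_le_iff_ne_zero.mpr (by positivity), ?_⟩
    refine ⟨[], SubstMin.lBlock σ n u j0 ++ a :: t, ?_⟩
    rw [ht, SubstMin.lBlock_rep hper' m]
    simp
  · rintro ⟨n, hn, u, w, hune, hus, heq⟩
    apply hnp
    obtain ⟨j0, d, hj0, hd, hper⟩ := SubstMin.eventually_periodic hne hus n
    have hper' : ∀ i, j0 ≤ i → SubstMin.vSeq σ n u (i + d) = SubstMin.vSeq σ n u i :=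
      fun i hi => hper i hi
    refine SubstMin.periodic_of_rep_infix σ hmin
      (((List.range d).map (fun r => SubstMin.vSeq σ n u (j0 + r))).flatten)
      (SubstMin.rP_ne_nil hne hune hd) (fun m => ?_)
    obtain ⟨t, ht⟩ := SubstMin.right_decomp heq (j0 + m * d)
    refine ⟨a, n * (j0 + m * d), Nat.one_le_iff_ne_zero.mpr (by positivity), ?_⟩
    refine ⟨t ++ a :: SubstMin.rBlock σ n u j0, [], ?_⟩
    rw [ht, SubstMin.rBlock_rep hper' m]
    simp
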